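/- If C is an n-qubit unitary such that conjugation by C maps every n-fold tensor product of Pauli matrices (up to phase) to another such product up to phase, and |ψ₀⟩ = |a₁⟩⊗...⊗|aₙ⟩ is a product state, then the difference p₀ - p₁ of outcome probabilities for a Z-measurement on qubit 1 of C|ψ₀⟩ equals a product ∏ₖ⟨aₖ|Pₖ|aₖ⟩ times a phase, for some Pauli matrices Pₖ ∈ {I,X,Y,Z}. -/

import Mathlib

open Matrix Kronecker
noncomputable section

/-- 2×2 complex matrices -/
abbrev M2 := Matrix (Fin 2) (Fin 2) ℂ
/-- 4×4 complex matrices, indexed by two qubits -/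
abbrev M4 := Matrix (Fin 2 × Fin 2) (Fin 2 × Fin 2) ℂ

/-- Pauli X -/
def PX : M2 := !![0, 1; 1, 0]
/-- Pauli Y -/
def PY : M2 := !![0, -Complex.I; Complex.I, 0]
/-- Pauli Z -/
def PZ : M2 := !![1, 0; 0, -1]

/-- The matchgate matrix `G(A,B)`: `A` acts on the even-parity subspace
spanned by `|00⟩, |11⟩` and `B` on the odd-parity subspace spanned by
`|01⟩, |10⟩`. -/
def G (A B : M2) : M4 := fun p q =>
  if p.1 = p.2 then (if q.1 = q.2 then A p.1 q.1 else 0)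
  else (if q.1 ≠ q.2 then B p.1 q.1 else 0)

/-- Tensor (Kronecker) product of `n` single-qubit operators, as a matrix on
`(ℂ²)^⊗n`. -/
def site (n : ℕ) (f : Fin n → M2) :
    Matrix (Fin n → Fin 2) (Fin n → Fin 2) ℂ :=
  fun a b => ∏ k, f k (a k) (b k)


lemma key_quad (n : ℕ) (Q : Fin n → M2) (a : Fin n → Fin 2 → ℂ) :
    star (fun x : Fin n → Fin 2 => ∏ k, a k (x k)) ⬝ᵥ
      (site n Q).mulVec (fun x : Fin n → Fin 2 => ∏ k, a k (x k)) =
    ∏ k, star (a k) ⬝ᵥ (Q k).mulVec (a k) := by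
  have lhs : star (fun x : Fin n → Fin 2 => ∏ k, a k (x k)) ⬝ᵥ
      (site n Q).mulVec (fun x : Fin n → Fin 2 => ∏ k, a k (x k)) =
      ∑ x : Fin n → Fin 2, ∑ y : Fin n → Fin 2,
        ∏ k, ((starRingEnd ℂ) (a k (x k)) * Q k (x k) (y k) * a k (y k)) := by
    simp only [dotProduct, mulVec, site, Pi.star_apply, RCLike.star_def, Finset.mul_sum]
    refine Finset.sum_congr rfl fun x _ => Finset.sum_congr rfl fun y _ => ?_
    rw [map_prod, ← Finset.prod_mul_distrib, ← Finset.prod_mul_distrib]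
    simp [mul_assoc]
  have rhs : ∀ k, star (a k) ⬝ᵥ (Q k).mulVec (a k) =
      ∑ b : Fin 2 × Fin 2, (starRingEnd ℂ) (a k b.1) * Q k b.1 b.2 * a k b.2 := by
    intro k
    simp only [dotProduct, mulVec, Pi.star_apply, RCLike.star_def, Finset.mul_sum,
      Fintype.sum_prod_type, mul_assoc]
  rw [lhs]
  simp only [rhs]
  rw [Finset.prod_univ_sum, Fintype.piFinset_univ]
  conv_lhs => rw [← Fintype.sum_prod_type']
  exact (Equiv.sum_comp (Equiv.arrowProdEquivProdArrow (Fin n) (fun _ => Fin 2) (fun _ => Fin 2))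
    (fun pr => ∏ i, (starRingEnd ℂ) (a i (pr.1 i)) * Q i (pr.1 i) (pr.2 i) * a i (pr.2 i))).symm

theorem stmt15 (n : ℕ) (hn : 0 < n)
    (C : Matrix (Fin n → Fin 2) (Fin n → Fin 2) ℂ)
    (hC : C ∈ Matrix.unitaryGroup (Fin n → Fin 2) ℂ)
    (hconj : ∀ P : Fin n → M2, (∀ k, P k ∈ ({1, PX, PY, PZ} : Set M2)) →
      ∃ (c : ℂ) (Q : Fin n → M2), ‖c‖ = 1 ∧
        (∀ k, Q k ∈ ({1, PX, PY, PZ} : Set M2)) ∧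
        Cᴴ * site n P * C = c • site n Q)
    (a : Fin n → Fin 2 → ℂ) :
    ∃ (c : ℂ) (Q : Fin n → M2), ‖c‖ = 1 ∧
      (∀ k, Q k ∈ ({1, PX, PY, PZ} : Set M2)) ∧
      star (fun x : Fin n → Fin 2 => ∏ k, a k (x k)) ⬝ᵥ
          (Cᴴ * site n (fun m => if m = (⟨0, hn⟩ : Fin n) then PZ else 1) *
            C).mulVec (fun x : Fin n → Fin 2 => ∏ k, a k (x k)) =
        c * ∏ k, star (a k) ⬝ᵥ (Q k).mulVec (a k) := by
  obtain ⟨c, Q, hc, hQ, heq⟩ := hconj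
    (fun m => if m = (⟨0, hn⟩ : Fin n) then PZ else 1)
    (fun k => by by_cases h : k = (⟨0, hn⟩ : Fin n) <;> simp [h])
  refine ⟨c, Q, hc, hQ, ?_⟩
  rw [heq, smul_mulVec, dotProduct_smul, smul_eq_mul, key_quad]
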